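/- The function φ satisfies the integral inequality ∫_0^∞ φ(s)² / |φ′(s)| ds ≤ K0/γ², where K0 := a ξ^{2−δ}/(δ(2−δ)) + e^{−ξ} and φ′ denotes the derivative of φ (given piecewise by φ′(s) = −(aδ/γ^δ) s^{−(δ+1)} for 0 < s < ξ/γ and φ′(s) = −γ e^{−γs} for s > ξ/γ). -/

import Mathlib

open Set MeasureTheory Real Filter Topology intervalIntegral

theorem stmt4 (n : ℕ) (hn : 3 ≤ n) (ξ δ γ : ℝ)
    (hξ1 : 4 - 4 / (n : ℝ) < ξ) (hξ2 : ξ ≤ 4)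
    (hδ : δ ∈ Set.Ioo (0 : ℝ) 1) (hγ : 0 < γ)
    (a b K0 : ℝ)
    (ha : a = ξ ^ (δ + 1) / δ * Real.exp (-ξ))
    (hb : b = (ξ / δ - 1) * Real.exp (-ξ))
    (hK0 : K0 = a * ξ ^ (2 - δ) / (δ * (2 - δ)) + Real.exp (-ξ))
    (φ φ' : ℝ → ℝ)
    (hφ1 : ∀ s : ℝ, 0 < s → s < ξ / γ → φ s = a / γ ^ δ * s ^ (-δ) - b)
    (hφ2 : ∀ s : ℝ, ξ / γ ≤ s → φ s = Real.exp (-γ * s))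
    (hφ'1 : ∀ s : ℝ, 0 < s → s < ξ / γ → φ' s = -(a * δ / γ ^ δ) * s ^ (-(δ + 1)))
    (hφ'2 : ∀ s : ℝ, ξ / γ < s → φ' s = -γ * Real.exp (-γ * s)) :
    MeasureTheory.IntegrableOn (fun s => (φ s) ^ 2 / |φ' s|) (Set.Ioi 0) ∧
    ∫ s in Set.Ioi (0 : ℝ), (φ s) ^ 2 / |φ' s| ≤ K0 / γ ^ 2 := by
  obtain ⟨hδ0, hδ1⟩ := hδ
  have hn3 : (3:ℝ) ≤ n := by exact_mod_cast hn
  have hn0 : (0:ℝ) < n := by linarith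
  have h43 : 4 / (n:ℝ) ≤ 4/3 := by
    apply div_le_div_of_nonneg_left (by norm_num) (by norm_num) hn3
  have hξ0 : 0 < ξ := by linarith
  have hξδ : δ < ξ := by linarith
  have hexp : (0:ℝ) < Real.exp (-ξ) := Real.exp_pos _
  have hγδ : (0:ℝ) < γ ^ δ := Real.rpow_pos_of_pos hγ δ
  have ha0 : 0 < a := by
    rw [ha]
    have := Real.rpow_pos_of_pos hξ0 (δ + 1)
    positivity
  have hb0 : 0 < b := by
    rw [hb]
    have : 1 < ξ / δ := (one_lt_div hδ0).2 hξδ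
    nlinarith
  set c := ξ / γ with hcdef
  have hc : 0 < c := div_pos hξ0 hγ
  -- key algebraic facts
  have hkey : a * ξ ^ (-δ) = ξ / δ * Real.exp (-ξ) := by
    rw [ha, show ξ ^ (δ+1) / δ * Real.exp (-ξ) * ξ ^ (-δ)
        = (ξ ^ (δ+1) * ξ ^ (-δ)) / δ * Real.exp (-ξ) by ring,
      ← Real.rpow_add hξ0]
    norm_num
  have hcrpow : c ^ (-δ) = ξ ^ (-δ) * γ ^ δ := by
    rw [hcdef, Real.div_rpow hξ0.le hγ.le, Real.rpow_neg hγ.le]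
    field_simp
  -- lower bound of the linear part on Ioo 0 c
  have hlow : ∀ s ∈ Ioo (0:ℝ) c, b ≤ a / γ ^ δ * s ^ (-δ) := by
    intro s hs
    have hs0 : 0 < s := hs.1
    have h1 : c ^ (-δ) ≤ s ^ (-δ) :=
      Real.rpow_le_rpow_of_nonpos hs0 hs.2.le (by linarith)
    have h2 : a / γ ^ δ * c ^ (-δ) ≤ a / γ ^ δ * s ^ (-δ) := by
      apply mul_le_mul_of_nonneg_left h1 (by positivity)
    have h3 : a / γ ^ δ * c ^ (-δ) = a * ξ ^ (-δ) := by
      rw [hcrpow]; field_simp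
    rw [h3, hkey] at h2
    have : b ≤ ξ / δ * Real.exp (-ξ) := by
      rw [hb]; nlinarith
    linarith
  set A := a / (δ * γ ^ δ) with hAdef
  have hA : 0 < A := by positivity
  -- pointwise identity on Ioo 0 c
  have hfid : ∀ s ∈ Ioo (0:ℝ) c, φ s ^ 2 / |φ' s|
      = (a / γ ^ δ * s ^ (-δ) - b) ^ 2 / (a * δ / γ ^ δ * s ^ (-(δ+1))) := by
    intro s hs
    have hs0 : 0 < s := hs.1
    have hd : (0:ℝ) < a * δ / γ ^ δ * s ^ (-(δ+1)) := by
      have := Real.rpow_pos_of_pos hs0 (-(δ+1)); positivity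
    rw [hφ1 s hs0 hs.2, hφ'1 s hs0 hs.2, neg_mul, abs_neg, abs_of_pos hd]
  -- pointwise bound on Ioo 0 c
  have hfle : ∀ s ∈ Ioo (0:ℝ) c,
      (a / γ ^ δ * s ^ (-δ) - b) ^ 2 / (a * δ / γ ^ δ * s ^ (-(δ+1)))
      ≤ A * s ^ (1 - δ) := by
    intro s hs
    have hs0 : 0 < s := hs.1
    have hD : (0:ℝ) < a * δ / γ ^ δ * s ^ (-(δ+1)) := by
      have := Real.rpow_pos_of_pos hs0 (-(δ+1)); positivity
    rw [div_le_iff₀ hD]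
    have hM : 0 < a / γ ^ δ * s ^ (-δ) := by
      have := Real.rpow_pos_of_pos hs0 (-δ); positivity
    have hsq : (a / γ ^ δ * s ^ (-δ) - b) ^ 2 ≤ (a / γ ^ δ * s ^ (-δ)) ^ 2 := by
      have h1 := hlow s hs
      nlinarith [hb0]
    have h1 : s ^ (1 - δ) * s ^ (-(δ+1)) = s ^ (-δ) * s ^ (-δ) := by
      rw [← Real.rpow_add hs0, ← Real.rpow_add hs0]; ring_nf
    have heq : A * s ^ (1 - δ) * (a * δ / γ ^ δ * s ^ (-(δ+1)))
        = (a / γ ^ δ * s ^ (-δ)) ^ 2 := by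
      calc A * s ^ (1 - δ) * (a * δ / γ ^ δ * s ^ (-(δ+1)))
          = (A * (a * δ / γ ^ δ)) * (s ^ (1 - δ) * s ^ (-(δ+1))) := by ring
        _ = (A * (a * δ / γ ^ δ)) * (s ^ (-δ) * s ^ (-δ)) := by rw [h1]
        _ = (a / γ ^ δ * s ^ (-δ)) ^ 2 := by
            rw [hAdef]; field_simp
    linarith [hsq, heq.ge, heq.le]
  -- integrability on Ioo 0 c
  have hmeas1 : AEStronglyMeasurable
      (fun s : ℝ => (a / γ ^ δ * s ^ (-δ) - b) ^ 2 / (a * δ / γ ^ δ * s ^ (-(δ+1))))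
      (volume.restrict (Ioo 0 c)) := by
    apply Measurable.aestronglyMeasurable
    fun_prop
  have hgint : IntegrableOn (fun s : ℝ => A * s ^ (1 - δ)) (Ioo 0 c) := by
    have h := intervalIntegrable_rpow' (a := 0) (b := c)
      (show (-1:ℝ) < 1 - δ by linarith)
    rw [intervalIntegrable_iff_integrableOn_Ioc_of_le hc.le] at h
    exact (h.mono_set Ioo_subset_Ioc_self).const_mul A
  have hint1' : IntegrableOn
      (fun s : ℝ => (a / γ ^ δ * s ^ (-δ) - b) ^ 2 / (a * δ / γ ^ δ * s ^ (-(δ+1))))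
      (Ioo 0 c) := by
    apply Integrable.mono' hgint hmeas1
    filter_upwards [ae_restrict_mem measurableSet_Ioo] with s hs
    have hD : (0:ℝ) < a * δ / γ ^ δ * s ^ (-(δ+1)) := by
      have := Real.rpow_pos_of_pos hs.1 (-(δ+1)); positivity
    rw [Real.norm_eq_abs, abs_of_nonneg (div_nonneg (sq_nonneg _) hD.le)]
    exact hfle s hs
  have hint1 : IntegrableOn (fun s => φ s ^ 2 / |φ' s|) (Ioo 0 c) :=
    hint1'.congr_fun (fun s hs => (hfid s hs).symm) measurableSet_Ioo
  -- integral bound on Ioo 0 c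
  have hI1 : ∫ s in Ioo (0:ℝ) c, φ s ^ 2 / |φ' s|
      ≤ a * ξ ^ (2 - δ) / (δ * (2 - δ)) / γ ^ 2 := by
    rw [setIntegral_congr_fun measurableSet_Ioo hfid]
    have h2 : ∫ s in Ioo (0:ℝ) c,
        (a / γ ^ δ * s ^ (-δ) - b) ^ 2 / (a * δ / γ ^ δ * s ^ (-(δ+1)))
        ≤ ∫ s in Ioo (0:ℝ) c, A * s ^ (1 - δ) :=
      setIntegral_mono_on hint1' hgint measurableSet_Ioo hfle
    have h3 : ∫ s in Ioo (0:ℝ) c, A * s ^ (1 - δ) = A * (c ^ (2 - δ) / (2 - δ)) := by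
      rw [← integral_Ioc_eq_integral_Ioo, ← integral_of_le hc.le,
        intervalIntegral.integral_const_mul,
        integral_rpow (Or.inl (show (-1:ℝ) < 1 - δ by linarith)),
        Real.zero_rpow (show (1:ℝ) - δ + 1 ≠ 0 by intro h; linarith),
        show (1:ℝ) - δ + 1 = 2 - δ by ring]
      ring
    have h4 : A * (c ^ (2 - δ) / (2 - δ)) = a * ξ ^ (2 - δ) / (δ * (2 - δ)) / γ ^ 2 := by
      have hcr : c ^ (2 - δ) = ξ ^ (2 - δ) / γ ^ (2 - δ) := Real.div_rpow hξ0.le hγ.le _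
      have hγ2 : γ ^ δ * γ ^ (2 - δ) = γ ^ 2 := by
        rw [← Real.rpow_add hγ, show δ + (2 - δ) = ((2:ℕ):ℝ) by push_cast; ring,
          Real.rpow_natCast]
      have hprod : δ * γ ^ δ * (γ ^ (2 - δ) * (2 - δ)) = δ * (2 - δ) * γ ^ 2 := by
        rw [show δ * γ ^ δ * (γ ^ (2 - δ) * (2 - δ)) = δ * (2 - δ) * (γ ^ δ * γ ^ (2 - δ)) by ring, hγ2]
      rw [hAdef, hcr, div_div, div_mul_div_comm, hprod, ← div_div]
    linarith
  -- the second interval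
  have heq2 : ∀ s ∈ Ioi c, φ s ^ 2 / |φ' s| = Real.exp (-γ * s) / γ := by
    intro s hs
    have hcs : c < s := mem_Ioi.mp hs
    have hneg : -γ * Real.exp (-γ * s) < 0 :=
      mul_neg_of_neg_of_pos (neg_lt_zero.mpr hγ) (Real.exp_pos _)
    rw [hφ2 s hcs.le, hφ'2 s hcs, abs_of_neg hneg]
    have hne := Real.exp_ne_zero (-γ * s)
    field_simp
  have hint2 : IntegrableOn (fun s => φ s ^ 2 / |φ' s|) (Ioi c) := by
    have hi : IntegrableOn (fun s : ℝ => Real.exp (-γ * s) / γ) (Ioi c) :=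
      (exp_neg_integrableOn_Ioi c hγ).div_const γ
    exact hi.congr_fun (fun s hs => (heq2 s hs).symm) measurableSet_Ioi
  have hI2 : ∫ s in Ioi c, φ s ^ 2 / |φ' s| = Real.exp (-ξ) / γ ^ 2 := by
    rw [setIntegral_congr_fun measurableSet_Ioi heq2]
    have hF : ∀ x ∈ Ici c, HasDerivAt (fun s : ℝ => -Real.exp (-γ * s) / γ)
        (Real.exp (-γ * x)) x := by
      intro x _
      have h := (((hasDerivAt_id x).const_mul (-γ)).exp.neg).div_const γ
      convert h using 1
      · rfl
      · rfl
      · rfl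
      field_simp
      rfl
    have htend : Tendsto (fun s : ℝ => -Real.exp (-γ * s) / γ) atTop (𝓝 0) := by
      have h1 : Tendsto (fun s : ℝ => γ * s) atTop atTop :=
        Filter.Tendsto.const_mul_atTop hγ tendsto_id
      have h2 : Tendsto (fun s : ℝ => Real.exp (-γ * s)) atTop (𝓝 0) := by
        refine (Real.tendsto_exp_neg_atTop_nhds_zero.comp h1).congr fun s => ?_
        simp [Function.comp, neg_mul]
      simpa using h2.neg.div_const γ
    have hval := integral_Ioi_of_hasDerivAt_of_tendsto' hF
      (exp_neg_integrableOn_Ioi c hγ) htend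
    rw [MeasureTheory.integral_div, hval]
    have hcc : -γ * c = -ξ := by rw [hcdef]; field_simp
    rw [hcc]
    ring
  -- combine
  have hsplit : Ioc (0:ℝ) c ∪ Ioi c = Ioi (0:ℝ) := Ioc_union_Ioi_eq_Ioi hc.le
  have hint1c : IntegrableOn (fun s => φ s ^ 2 / |φ' s|) (Ioc 0 c) := by
    rw [integrableOn_Ioc_iff_integrableOn_Ioo]; exact hint1
  have hint : IntegrableOn (fun s => φ s ^ 2 / |φ' s|) (Ioi 0) := by
    rw [← hsplit]; exact hint1c.union hint2
  refine ⟨hint, ?_⟩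
  rw [← hsplit, setIntegral_union (Ioc_disjoint_Ioi le_rfl) measurableSet_Ioi hint1c hint2,
    integral_Ioc_eq_integral_Ioo, hK0, hI2, add_div]
  linarith
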